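/- Let Ψ = (E, Δ) be a pure ordered complex satisfying both the quasi-exchange axiom and the First Basis Property. Then for every facet B, every element of B \ B₀ is internally passive in B, where B₀ is the lexicographically smallest facet. -/

import Mathlib

variable {α : Type*} [LinearOrder α] [DecidableEq α] [Fintype α]

/-- A (abstract) simplicial complex: a downward closed family of finite sets. -/
def IsComplex (Δ : Finset α → Prop) : Prop :=
  ∀ ⦃s t : Finset α⦄, Δ t → s ⊆ t → Δ s

/-- A simplicial complex with all faces contained in the ground set `E`. -/
def IsComplexOn (E : Finset α) (Δ : Finset α → Prop) : Prop :=
  (∀ ⦃s⦄, Δ s → s ⊆ E) ∧ IsComplex Δ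

/-- A facet (basis): a maximal face. -/
def IsFacet (Δ : Finset α → Prop) (B : Finset α) : Prop :=
  Δ B ∧ ∀ ⦃C⦄, Δ C → B ⊆ C → B = C

/-- A circuit with respect to the ground set `E`: a minimal non-face contained in `E`. -/
def IsCircuitOn (E : Finset α) (Δ : Finset α → Prop) (C : Finset α) : Prop :=
  C ⊆ E ∧ ¬ Δ C ∧ ∀ ⦃D⦄, D ⊂ C → Δ D

/-- A circuit: a minimal non-face. -/
def IsCircuit (Δ : Finset α → Prop) (C : Finset α) : Prop :=
  ¬ Δ C ∧ ∀ ⦃D⦄, D ⊂ C → Δ D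

/-- Purity: all facets have the same cardinality. -/
def IsPure (Δ : Finset α → Prop) : Prop :=
  ∀ ⦃B B'⦄, IsFacet Δ B → IsFacet Δ B' → B.card = B'.card

/-- Lexicographic order on finite sets, comparing sorted element lists:
`B <lex B'` iff the minimum of the symmetric difference lies in `B`. -/
def lexLt (B B' : Finset α) : Prop :=
  ∃ a ∈ B \ B', ∀ b ∈ symmDiff B B', a ≤ b

def lexLe (B B' : Finset α) : Prop := B = B' ∨ lexLt B B'

/-- `B₀` is the lexicographically smallest facet of `Δ`. -/
def IsLexMinFacet (Δ : Finset α → Prop) (B₀ : Finset α) : Prop :=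
  IsFacet Δ B₀ ∧ ∀ ⦃B⦄, IsFacet Δ B → lexLe B₀ B

/-- Gale (componentwise) order: the `i`-th smallest element of `B` is at most
the `i`-th smallest element of `B'`, for all `i` (in particular equal cardinalities). -/
def galeLe (B B' : Finset α) : Prop :=
  List.Forall₂ (· ≤ ·) (Finset.sort B (· ≤ ·)) (Finset.sort B' (· ≤ ·))

/-- Quasi-exchange axiom (without the purity requirement). -/
def QE (Δ : Finset α → Prop) : Prop :=
  ∀ ⦃B₁ B₂⦄, IsFacet Δ B₁ → IsFacet Δ B₂ →
    ∀ b₁ ∈ B₁ \ B₂, (∀ b ∈ B₂ \ B₁, b < b₁) →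
      ∃ b₂ ∈ B₂ \ B₁, IsFacet Δ (insert b₂ (B₁.erase b₁))

/-- Quasi-circuit axiom (with circuits taken relative to the ground set `E`). -/
def QCon (E : Finset α) (Δ : Finset α → Prop) : Prop :=
  ∀ ⦃C₁ C₂⦄, IsCircuitOn E Δ C₁ → IsCircuitOn E Δ C₂ → C₁ ≠ C₂ →
    ∀ c ∈ C₁ ∩ C₂, (∃ m ∈ symmDiff C₁ C₂, c < m) →
      ∃ C₃, IsCircuitOn E Δ C₃ ∧ C₃ ⊆ (C₁ ∪ C₂).erase c

/-- Quasi-circuit axiom (circuits are arbitrary minimal non-faces). -/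
def QC (Δ : Finset α → Prop) : Prop :=
  ∀ ⦃C₁ C₂⦄, IsCircuit Δ C₁ → IsCircuit Δ C₂ → C₁ ≠ C₂ →
    ∀ c ∈ C₁ ∩ C₂, (∃ m ∈ symmDiff C₁ C₂, c < m) →
      ∃ C₃, IsCircuit Δ C₃ ∧ C₃ ⊆ (C₁ ∪ C₂).erase c

/-- `b` is an internally passive element of the facet `B`. -/
def InternallyPassive (Δ : Finset α → Prop) (B : Finset α) (b : α) : Prop :=
  b ∈ B ∧ ∃ b', b' < b ∧ b' ∉ B ∧ IsFacet Δ (insert b' (B.erase b))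

/-- Contraction of a face `I`. -/
def contract (Δ : Finset α → Prop) (I : Finset α) : Finset α → Prop :=
  fun J => Disjoint J I ∧ Δ (J ∪ I)

/-- Quasi-independence axiom: `Δ` is pure and for faces `I₁, I₂` with `|I₁| > |I₂|`,
if `I₁ \ I ⊆ B_{I,0}` for some `I ⊆ I₁ ∩ I₂`, then some `e ∈ I₁ \ I₂` extends `I₂`. -/
def QI (Δ : Finset α → Prop) : Prop :=
  IsPure Δ ∧ ∀ ⦃I₁ I₂ : Finset α⦄, Δ I₁ → Δ I₂ → I₂.card < I₁.card →
    (∃ I, I ⊆ I₁ ∩ I₂ ∧ ∃ B, IsLexMinFacet (contract Δ I) B ∧ I₁ \ I ⊆ B) →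
    ∃ e ∈ I₁ \ I₂, Δ (insert e I₂)

/-- The First Basis Property. -/
inductive FBP : (Finset α → Prop) → Prop
  | rank1 (Δ : Finset α → Prop) (h : ∀ s, Δ s → s.card ≤ 1) : FBP Δ
  | unique (Δ : Finset α → Prop) (B : Finset α) (hB : IsFacet Δ B)
      (hu : ∀ B', IsFacet Δ B' → B' = B) : FBP Δ
  | step (Δ : Finset α → Prop) (B₀ : Finset α) (h₀ : IsLexMinFacet Δ B₀)
      (h1 : ∀ v, Δ {v} → v ∉ B₀ → FBP (contract Δ {v}))
      (h2 : ∀ v, Δ {v} → v ∉ B₀ →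
        ∃ Bv, IsLexMinFacet (contract Δ {v}) Bv ∧ Bv ⊆ B₀) :
      FBP Δ

/-- The lexicographically smallest facet is unique. -/
lemma lexmin_unique {Δ : Finset α → Prop} {B₀ B₀' : Finset α}
    (h : IsLexMinFacet Δ B₀) (h' : IsLexMinFacet Δ B₀') : B₀ = B₀' := by
  rcases h.2 h'.1 with h1 | h1
  · exact h1
  rcases h'.2 h.1 with h2 | h2
  · exact h2.symm
  obtain ⟨a, ha, hale⟩ := h1
  obtain ⟨a', ha', ha'le⟩ := h2
  have haB : a ∈ B₀ ∧ a ∉ B₀' := Finset.mem_sdiff.1 ha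
  have ha'B : a' ∈ B₀' ∧ a' ∉ B₀ := Finset.mem_sdiff.1 ha'
  have h3 : a ≤ a' := hale a' (by simp [Finset.mem_symmDiff, ha'B.1, ha'B.2])
  have h4 : a' ≤ a := ha'le a (by simp [Finset.mem_symmDiff, haB.1, haB.2])
  have : a = a' := le_antisymm h3 h4
  exact absurd (this ▸ haB.1) ha'B.2

/-- Facets of a single-vertex contraction. -/
lemma facet_contract {Δ : Finset α → Prop} (hc : IsComplex Δ) (v : α) (J : Finset α) :
    IsFacet (contract Δ {v}) J ↔ v ∉ J ∧ IsFacet Δ (insert v J) := by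
  have hins : ∀ K : Finset α, K ∪ {v} = insert v K := by
    intro K; ext x; simp [Finset.mem_union, Finset.mem_insert, or_comm]
  constructor
  · rintro ⟨⟨hdisj, hface⟩, hmax⟩
    have hvJ : v ∉ J := by
      intro hv; exact (Finset.disjoint_left.1 hdisj hv) (Finset.mem_singleton_self v)
    refine ⟨hvJ, by rwa [hins J] at hface, ?_⟩
    intro C hC hsub
    have hvC : v ∈ C := hsub (Finset.mem_insert_self v J)
    have hJC : J ⊆ C.erase v := by
      intro x hx
      exact Finset.mem_erase.2 ⟨fun h => hvJ (h ▸ hx), hsub (Finset.mem_insert_of_mem hx)⟩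
    have hCv : contract Δ {v} (C.erase v) := by
      refine ⟨Finset.disjoint_singleton_right.2 (Finset.notMem_erase v C), ?_⟩
      rw [hins, Finset.insert_erase hvC]; exact hC
    have hJeq := hmax hCv hJC
    rw [hJeq, Finset.insert_erase hvC]
  · rintro ⟨hvJ, ⟨hface, hmax⟩⟩
    refine ⟨⟨Finset.disjoint_singleton_right.2 hvJ, by rwa [hins J]⟩, ?_⟩
    rintro C ⟨hdisj, hCface⟩ hsub
    have hvC : v ∉ C := fun hv => (Finset.disjoint_left.1 hdisj hv) (Finset.mem_singleton_self v)
    rw [hins] at hCface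
    have h1 : insert v J ⊆ insert v C := Finset.insert_subset_insert v hsub
    have h2 := hmax hCface h1
    apply Finset.Subset.antisymm hsub
    intro x hx
    have : x ∈ insert v J := h2 ▸ Finset.mem_insert_of_mem hx
    rcases Finset.mem_insert.1 this with h | h
    · exact absurd (h ▸ hx) hvC
    · exact h

/-- The direct quasi-exchange argument when everything in `B₀ \ B` is below `b`. -/
lemma qe_case {Δ : Finset α → Prop} (hQE : QE Δ) {B₀ B : Finset α} {b : α}
    (hB : IsFacet Δ B) (hB₀f : IsFacet Δ B₀) (hb : b ∈ B) (hbn : b ∉ B₀)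
    (hlt : ∀ x ∈ B₀ \ B, x < b) : InternallyPassive Δ B b := by
  obtain ⟨b₂, hb₂, hfac⟩ := hQE hB hB₀f b (Finset.mem_sdiff.2 ⟨hb, hbn⟩) hlt
  exact ⟨hb, b₂, hlt b₂ hb₂, (Finset.mem_sdiff.1 hb₂).2, hfac⟩

lemma key {Δ : Finset α → Prop} (hFBP : FBP Δ) :
    IsComplex Δ → IsPure Δ → QE Δ →
    ∀ B₀, IsLexMinFacet Δ B₀ → ∀ B, IsFacet Δ B →
    ∀ b ∈ B, b ∉ B₀ → InternallyPassive Δ B b := by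
  induction hFBP with
  | rank1 Δ h =>
    intro hc hpure hQE B₀ hB₀ B hB b hb hbn
    refine qe_case hQE hB hB₀.1 hb hbn ?_
    intro x hx
    obtain ⟨hxB₀, hxB⟩ := Finset.mem_sdiff.1 hx
    have hne : B₀ ≠ B := fun h => hbn (h ▸ hb)
    rcases hB₀.2 hB with h' | h'
    · exact absurd h' hne
    obtain ⟨y, hy, hyle⟩ := h'
    have hyB₀ : y ∈ B₀ := (Finset.mem_sdiff.1 hy).1
    have hxy : x = y := by
      have h1 := h B₀ hB₀.1.1
      have := Finset.card_le_one.1 h1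
      exact this x hxB₀ y hyB₀
    have hle : x ≤ b := hxy ▸ hyle b (by simp [Finset.mem_symmDiff, hb, hbn])
    exact lt_of_le_of_ne hle (fun h => hxB (h ▸ hb))
  | unique Δ Bstar hBf hu =>
    intro hc hpure hQE B₀ hB₀ B hB b hb hbn
    have h' : B = B₀ := (hu B hB).trans (hu B₀ hB₀.1).symm
    exact absurd (h' ▸ hb) hbn
  | step Δ B₀' h₀ h1 h2 ih1 =>
    intro hc hpure hQE B₀ hB₀ B hB b hb hbn
    have hBB : B₀ = B₀' := lexmin_unique hB₀ h₀
    subst hBB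
    by_cases hcase : ∀ v ∈ B, v ∉ B₀ → v = b
    · -- B \ B₀ = {b}; direct quasi-exchange
      refine qe_case hQE hB hB₀.1 hb hbn ?_
      intro x hx
      obtain ⟨hxB₀, hxB⟩ := Finset.mem_sdiff.1 hx
      have hBd : B \ B₀ = {b} := by
        apply Finset.Subset.antisymm
        · intro z hz
          obtain ⟨h1', h2'⟩ := Finset.mem_sdiff.1 hz
          exact Finset.mem_singleton.2 (hcase z h1' h2')
        · intro z hz
          rw [Finset.mem_singleton.1 hz]
          exact Finset.mem_sdiff.2 ⟨hb, hbn⟩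
      have hcards : (B₀ \ B).card = 1 := by
        rw [Finset.card_sdiff_comm (hpure hB₀.1 hB), hBd, Finset.card_singleton]
      have hne : B₀ ≠ B := fun h => hbn (h ▸ hb)
      rcases hB₀.2 hB with h' | h'
      · exact absurd h' hne
      obtain ⟨y, hy, hyle⟩ := h'
      have hxy : x = y := by
        obtain ⟨c, hcB⟩ := Finset.card_eq_one.1 hcards
        rw [hcB] at hx hy
        rw [Finset.mem_singleton.1 hx, Finset.mem_singleton.1 hy]
      have hle : x ≤ b := hxy ▸ hyle b (by simp [Finset.mem_symmDiff, hb, hbn])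
      exact lt_of_le_of_ne hle (fun h => hxB (h ▸ hb))
    · -- there is v ∈ B \ B₀ with v ≠ b; contract v and use induction
      push_neg at hcase
      obtain ⟨v, hvB, hvB₀, hvb⟩ := hcase
      have hΔv : Δ {v} := hc hB.1 (Finset.singleton_subset_iff.2 hvB)
      -- contraction facts
      have hc' : IsComplex (contract Δ {v}) := by
        rintro s t ⟨hdisj, hface⟩ hst
        exact ⟨Finset.disjoint_of_subset_left hst hdisj,
          hc hface (Finset.union_subset_union_left hst)⟩
      have hpure' : IsPure (contract Δ {v}) := by
        intro J J' hJ hJ'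
        obtain ⟨hvJ, hJf⟩ := (facet_contract hc v J).1 hJ
        obtain ⟨hvJ', hJf'⟩ := (facet_contract hc v J').1 hJ'
        have := hpure hJf hJf'
        rw [Finset.card_insert_of_notMem hvJ, Finset.card_insert_of_notMem hvJ'] at this
        omega
      have hQE' : QE (contract Δ {v}) := by
        intro B₁ B₂ hB₁ hB₂ b₁ hb₁ hblt
        obtain ⟨hvB₁, hB₁f⟩ := (facet_contract hc v B₁).1 hB₁
        obtain ⟨hvB₂, hB₂f⟩ := (facet_contract hc v B₂).1 hB₂
        obtain ⟨hb₁B₁, hb₁B₂⟩ := Finset.mem_sdiff.1 hb₁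
        have hsd : insert v B₂ \ insert v B₁ = B₂ \ B₁ := by
          ext x
          simp only [Finset.mem_sdiff, Finset.mem_insert]
          constructor
          · rintro ⟨h1' | h1', h2'⟩
            · exact absurd (Or.inl h1') h2'
            · exact ⟨h1', fun hx => h2' (Or.inr hx)⟩
          · rintro ⟨h1', h2'⟩
            exact ⟨Or.inr h1', fun hx => hx.elim (fun h => hvB₂ (h ▸ h1')) h2'⟩
        have hb₁' : b₁ ∈ insert v B₁ \ insert v B₂ := by
          simp only [Finset.mem_sdiff, Finset.mem_insert]
          exact ⟨Or.inr hb₁B₁, fun hx => hx.elim (fun h => hvB₁ (h ▸ hb₁B₁)) hb₁B₂⟩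
        obtain ⟨b₂, hb₂, hfac⟩ := hQE hB₁f hB₂f b₁ hb₁' (by rw [hsd]; exact hblt)
        rw [hsd] at hb₂
        obtain ⟨hb₂B₂, hb₂B₁⟩ := Finset.mem_sdiff.1 hb₂
        refine ⟨b₂, hb₂, ?_⟩
        rw [facet_contract hc]
        have hb₁v : b₁ ≠ v := fun h => hvB₁ (h ▸ hb₁B₁)
        have heq : insert b₂ ((insert v B₁).erase b₁) = insert v (insert b₂ (B₁.erase b₁)) := by
          rw [Finset.erase_insert_of_ne (Ne.symm hb₁v)]
          exact Finset.insert_comm b₂ v (B₁.erase b₁)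
        rw [heq] at hfac
        refine ⟨?_, hfac⟩
        simp only [Finset.mem_insert, Finset.mem_erase]
        rintro (h | ⟨-, h⟩)
        · exact hvB₂ (h ▸ hb₂B₂)
        · exact hvB₁ h
      obtain ⟨Bv, hBv, hBvsub⟩ := h2 v hΔv hvB₀
      -- B.erase v is a facet of the contraction containing b
      have hBev : IsFacet (contract Δ {v}) (B.erase v) := by
        rw [facet_contract hc]
        exact ⟨Finset.notMem_erase v B, by rwa [Finset.insert_erase hvB]⟩
      have hbmem : b ∈ B.erase v := Finset.mem_erase.2 ⟨fun h => hvb h.symm, hb⟩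
      have hbnBv : b ∉ Bv := fun h => hbn (hBvsub h)
      obtain ⟨-, b', hb'lt, hb'n, hb'fac⟩ :=
        ih1 v hΔv hvB₀ hc' hpure' hQE' Bv hBv (B.erase v) hBev b hbmem hbnBv
      obtain ⟨hvni, hfacΔ⟩ := (facet_contract hc v _).1 hb'fac
      have hb'v : b' ≠ v := fun h => hvni (h ▸ Finset.mem_insert_self b' _)
      have hb'B : b' ∉ B := by
        intro h
        exact hb'n (Finset.mem_erase.2 ⟨hb'v, h⟩)
      refine ⟨hb, b', hb'lt, hb'B, ?_⟩
      have heq : insert v (insert b' ((B.erase v).erase b)) = insert b' (B.erase b) := by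
        rw [Finset.erase_right_comm, Finset.insert_comm,
          Finset.insert_erase (Finset.mem_erase.2 ⟨hvb, hvB⟩)]
      rwa [heq] at hfacΔ

/-- in a pure complex satisfying the quasi-exchange axiom and the
First Basis Property, every element of `B \ B₀` is internally passive in `B`. -/
theorem stmt17 (E : Finset α) (Δ : Finset α → Prop) (hΔ : IsComplexOn E Δ)
    (hpure : IsPure Δ) (hQE : QE Δ) (hFBP : FBP Δ)
    (B₀ : Finset α) (hB₀ : IsLexMinFacet Δ B₀) (B : Finset α) (hB : IsFacet Δ B) :
    ∀ b ∈ B, b ∉ B₀ → InternallyPassive Δ B b :=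
  key hFBP hΔ.2 hpure hQE B₀ hB₀ B hB
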